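/- arXiv:2102.11383 — 5 statements merged into one kernel-verified Lean document; each statement's English description precedes it below -/
import Mathlib

section
/- Derivative of the time-dependent GEL DG mass-matrix entries (key computation in Theorem 3.3): let x₋ < x₊ be real numbers with Δx = x₊ − x₋, let ν₋, ν₊, α_j, T be real numbers, and define g(t) = x₋ + (t − T)·ν₋, h(t) = x₊ + (t − T)·ν₊, L(t) = h(t) − g(t), and the affine velocity field α(x,t) = (ν₋·(h(t) − x) + ν₊·(x − g(t)))/L(t). Let Ψ_m, Ψ_i : ℝ → ℝ be continuously differentiable and set ψ̃_m(x,t) = Ψ_m( x₋ + Δx·(x − g(t))/L(t) ) and ψ_i(x,t) = Ψ_i( x − α_j·(t − T) ). Then on any open time interval J containing T on which L(t) > 0, the function t ↦ (1/L(t))·∫_{g(t)}^{h(t)} ψ̃_m(x,t)·ψ_i(x,t) dx is differentiable with derivative (1/L(t))·∫_{g(t)}^{h(t)} (α(x,t) − α_j)·ψ̃_m(x,t)·∂_x ψ_i(x,t) dx. -/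
/-- Derivative of the time-dependent GEL DG mass-matrix entries:
the key computation in Theorem 3.3 (equivalence of semi-discrete GEL DG
and EL DG). -/
theorem gel_dg_mass_matrix_derivative
    (xm xp : ℝ) (hx : xm < xp) (νm νp αj T : ℝ)
    (Ψm Ψi : ℝ → ℝ) (hΨm : ContDiff ℝ 1 Ψm) (hΨi : ContDiff ℝ 1 Ψi)
    (g h L : ℝ → ℝ) (α : ℝ → ℝ → ℝ)
    (hg : g = fun t => xm + (t - T) * νm)
    (hh : h = fun t => xp + (t - T) * νp)
    (hL : L = fun t => h t - g t)
    (hα : α = fun x t => (νm * (h t - x) + νp * (x - g t)) / L t)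
    (ψbasis ψtest : ℝ → ℝ → ℝ)
    (hψb : ψbasis = fun x t => Ψm (xm + (xp - xm) * (x - g t) / L t))
    (hψt : ψtest = fun x t => Ψi (x - αj * (t - T)))
    (J : Set ℝ) (hJopen : IsOpen J) (hTJ : T ∈ J) (hLpos : ∀ t ∈ J, 0 < L t) :
    ∀ t ∈ J, HasDerivAt
      (fun s => (1 / L s) * ∫ x in g s..h s, ψbasis x s * ψtest x s)
      ((1 / L t) * ∫ x in g t..h t,
        (α x t - αj) * ψbasis x t * deriv (fun y => ψtest y t) x) t := by
  intro t ht
  have hΔ : (0:ℝ) < xp - xm := sub_pos.mpr hx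
  have hΔ' : xp - xm ≠ 0 := ne_of_gt hΔ
  set c : ℝ → ℝ := fun y => (νm - αj) + (νp - νm) * (y - xm) / (xp - xm) with hcdef
  have hccont : Continuous c := by fun_prop
  have hΨid : Differentiable ℝ Ψi := hΨi.differentiable one_ne_zero
  have hΨi' : Continuous (deriv Ψi) := hΨi.continuous_deriv le_rfl
  have hΨmc : Continuous Ψm := hΨm.continuous
  have hΨic : Continuous Ψi := hΨi.continuous
  -- abbreviations for the mesh map
  set m : ℝ → ℝ := fun s => L s / (xp - xm) with hmdef
  set d : ℝ → ℝ := fun s => g s - m s * xm with hddef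
  have hLs : ∀ s, L s = (xp - xm) + (s - T) * (νp - νm) := by
    intro s; simp [hL, hg, hh]; ring
  -- the generic substitution
  have sub : ∀ (s : ℝ) (f : ℝ → ℝ),
      (∫ x in g s..h s, f x) = m s * ∫ y in xm..xp, f (m s * y + d s) := by
    intro s f
    have h1 := intervalIntegral.smul_integral_comp_mul_add (a := xm) (b := xp) f (m s) (d s)
    have e1 : m s * xm + d s = g s := by simp [hddef]
    have e2 : m s * xp + d s = h s := by
      have hm1 : m s * (xp - xm) = L s := by simp only [hmdef]; field_simp
      have hm2 : h s = g s + L s := by rw [hL]; ring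
      simp only [hddef]; rw [hm2, ← hm1]; ring
    rw [e1, e2] at h1
    rw [← h1]; simp [smul_eq_mul]
  -- the reference-cell family and its s-derivative
  set F : ℝ → ℝ → ℝ := fun s y => Ψm y * Ψi (y + c y * (s - T)) with hF
  set F' : ℝ → ℝ → ℝ := fun s y => Ψm y * (deriv Ψi (y + c y * (s - T)) * c y) with hF'
  -- pointwise identity for the argument of Ψi after substitution
  have argid : ∀ s y, m s * y + d s - αj * (s - T) = y + c y * (s - T) := by
    intro s y
    have hmul : (xp - xm) * (m s * y + d s - αj * (s - T))
        = (xp - xm) * (y + c y * (s - T)) := by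
      simp only [hcdef, hmdef, hddef, hg]
      rw [hLs s]
      field_simp
      ring
    exact mul_left_cancel₀ hΔ' hmul
  have argΨm : ∀ s y, L s ≠ 0 → xm + (xp - xm) * (m s * y + d s - g s) / L s = y := by
    intro s y hLne
    simp only [hmdef, hddef]
    field_simp
    ring
  -- eventual equality of the two functions of s
  have heq : (fun s => (1 / L s) * ∫ x in g s..h s, ψbasis x s * ψtest x s)
      =ᶠ[nhds t] fun s => (1 / (xp - xm)) * ∫ y in xm..xp, F s y := by
    filter_upwards [hJopen.mem_nhds ht] with s hs
    have hLne : L s ≠ 0 := ne_of_gt (hLpos s hs)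
    have hsub := sub s (fun x => ψbasis x s * ψtest x s)
    rw [hsub]
    have : (fun y => ψbasis (m s * y + d s) s * ψtest (m s * y + d s) s)
        = fun y => F s y := by
      funext y
      simp only [hψb, hψt, hF]
      rw [argΨm s y hLne, argid s y]
    rw [this]
    rw [← mul_assoc]
    congr 1
    simp only [hmdef]; field_simp
  -- derivative of the reference integral
  have hcont_arg : Continuous fun p : ℝ × ℝ => p.2 + c p.2 * (p.1 - T) := by fun_prop
  -- bounds
  obtain ⟨C, hC⟩ := (isCompact_uIcc (a := xm) (b := xp)).exists_bound_of_continuousOn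
    hccont.continuousOn
  obtain ⟨Cm, hCm⟩ := (isCompact_uIcc (a := xm) (b := xp)).exists_bound_of_continuousOn
    hΨmc.continuousOn
  set R : ℝ := (|xm| + |xp|) + C * (|t - T| + 1) with hRdef
  obtain ⟨M, hM⟩ := (isCompact_Icc (a := -R) (b := R)).exists_bound_of_continuousOn
    hΨi'.continuousOn
  have hC0 : 0 ≤ C := le_trans (norm_nonneg _) (hC xm Set.left_mem_uIcc)
  have harg_mem : ∀ y ∈ Set.uIcc xm xp, ∀ s ∈ Metric.ball t 1,
      y + c y * (s - T) ∈ Set.Icc (-R) R := by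
    intro y hy s hs
    rw [Set.uIcc_of_le hx.le] at hy
    have h1 : |y| ≤ |xm| + |xp| := by
      have := abs_le_max_abs_abs hy.1 hy.2
      have h2 : max |xm| |xp| ≤ |xm| + |xp| :=
        max_le (le_add_of_nonneg_right (abs_nonneg _))
          (le_add_of_nonneg_left (abs_nonneg _))
      linarith
    have h2 : |c y| ≤ C := hC y (by rw [Set.uIcc_of_le hx.le]; exact hy)
    have hst : |s - t| < 1 := by
      have := Metric.mem_ball.mp hs
      rwa [Real.dist_eq] at this
    have h3 : |s - T| ≤ |t - T| + 1 := by
      have he : s - T = (s - t) + (t - T) := by ring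
      rw [he]
      calc |(s - t) + (t - T)| ≤ |s - t| + |t - T| := abs_add_le _ _
        _ ≤ |t - T| + 1 := by linarith
    have h4 : |c y * (s - T)| ≤ C * (|t - T| + 1) := by
      rw [abs_mul]
      exact mul_le_mul h2 h3 (abs_nonneg _) hC0
    have h5 : |y + c y * (s - T)| ≤ R := by
      calc |y + c y * (s - T)| ≤ |y| + |c y * (s - T)| := abs_add_le _ _
        _ ≤ R := by rw [hRdef]; linarith
    exact Set.mem_Icc.mpr (abs_le.mp h5)
  have hbound : ∀ y ∈ Set.uIoc xm xp, ∀ s ∈ Metric.ball t 1,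
      ‖F' s y‖ ≤ Cm * (M * C) := by
    intro y hy s hs
    have hy' : y ∈ Set.uIcc xm xp := Set.uIoc_subset_uIcc hy
    have h1 : ‖Ψm y‖ ≤ Cm := hCm y hy'
    have h2 : ‖deriv Ψi (y + c y * (s - T))‖ ≤ M :=
      hM _ (harg_mem y hy' s hs)
    have h3 : ‖c y‖ ≤ C := hC y hy'
    have hM0 : 0 ≤ M := le_trans (norm_nonneg _) h2
    have hCm0 : 0 ≤ Cm := le_trans (norm_nonneg _) h1
    calc ‖F' s y‖ = ‖Ψm y‖ * (‖deriv Ψi (y + c y * (s - T))‖ * ‖c y‖) := by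
          simp [hF', abs_mul]
      _ ≤ Cm * (M * C) := by gcongr
  have hFcont : ∀ s, Continuous fun y => F s y := by
    intro s
    exact hΨmc.mul (hΨic.comp (continuous_id.add (hccont.mul continuous_const)))
  have hF'cont : ∀ s, Continuous fun y => F' s y := by
    intro s
    exact hΨmc.mul
      ((hΨi'.comp (continuous_id.add (hccont.mul continuous_const))).mul hccont)
  have hdiff : ∀ y : ℝ, ∀ s : ℝ, HasDerivAt (fun s => F s y) (F' s y) s := by
    intro y s
    have h1 : HasDerivAt (fun s : ℝ => y + c y * (s - T)) (c y) s := by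
      have := (((hasDerivAt_id s).sub_const T).const_mul (c y)).const_add y
      simpa using this
    have h2 : HasDerivAt Ψi (deriv Ψi (y + c y * (s - T))) (y + c y * (s - T)) :=
      (hΨid _).hasDerivAt
    have h3 := (h2.comp s h1).const_mul (Ψm y)
    simpa [hF', Function.comp] using h3
  have hmain : HasDerivAt (fun s => ∫ y in xm..xp, F s y)
      (∫ y in xm..xp, F' t y) t := by
    have key := intervalIntegral.hasDerivAt_integral_of_dominated_loc_of_deriv_le
      (μ := MeasureTheory.volume) (a := xm) (b := xp) (F := F) (F' := F')
      (x₀ := t) (bound := fun _ => Cm * (M * C)) (s := Metric.ball t 1) (Metric.ball_mem_nhds t one_pos)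
      (Filter.Eventually.of_forall fun s => (hFcont s).aestronglyMeasurable)
      ((hFcont t).intervalIntegrable xm xp)
      (hF'cont t).aestronglyMeasurable
      (Filter.Eventually.of_forall hbound)
      intervalIntegrable_const
      (Filter.Eventually.of_forall fun y _ s _ => hdiff y s)
    exact key.2
  have hfinal := hmain.const_mul (1 / (xp - xm))
  have hderiv_eq : (1 / L t) * (∫ x in g t..h t,
      (α x t - αj) * ψbasis x t * deriv (fun y => ψtest y t) x)
      = (1 / (xp - xm)) * ∫ y in xm..xp, F' t y := by
    have hLne : L t ≠ 0 := ne_of_gt (hLpos t ht)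
    have hdψ : ∀ x, deriv (fun y => ψtest y t) x = deriv Ψi (x - αj * (t - T)) := by
      intro x
      have h1 : HasDerivAt (fun y : ℝ => Ψi (y - αj * (t - T)))
          (deriv Ψi (x - αj * (t - T)) * 1) x :=
        (hΨid _).hasDerivAt.comp x ((hasDerivAt_id x).sub_const _)
      rw [hψt]
      simpa using h1.deriv
    have hsub := sub t (fun x => (α x t - αj) * ψbasis x t * deriv (fun y => ψtest y t) x)
    rw [hsub]
    have hαid : ∀ y, α (m t * y + d t) t - αj = c y := by
      intro y
      have hmul : (L t * (xp - xm)) * (α (m t * y + d t) t - αj)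
          = (L t * (xp - xm)) * c y := by
        have hne : h t - g t ≠ 0 := by rw [hL] at hLne; exact hLne
        simp only [hα, hcdef, hmdef, hddef, hL]
        field_simp
        ring
      exact mul_left_cancel₀ (mul_ne_zero hLne hΔ') hmul
    have : (fun y => (α (m t * y + d t) t - αj) * ψbasis (m t * y + d t) t *
        deriv (fun y => ψtest y t) (m t * y + d t)) = fun y => F' t y := by
      funext y
      rw [hdψ, hαid y]
      simp only [hψb, hF']
      rw [argΨm t y hLne, argid t y]
      ring
    rw [this, ← mul_assoc]
    congr 1
    simp only [hmdef]; field_simp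
  rw [hderiv_eq]
  exact hfinal.congr_of_eventuallyEq heq
end

section
/- The pulled-back basis functions solve the EL DG adjoint problem: let x₋ < x₊ be real numbers with Δx = x₊ − x₋, let ν₋, ν₊, T be real numbers, and define g(t) = x₋ + (t − T)·ν₋, h(t) = x₊ + (t − T)·ν₊, L(t) = h(t) − g(t), and α(x,t) = (ν₋·(h(t) − x) + ν₊·(x − g(t)))/L(t). Let Ψ : ℝ → ℝ be continuously differentiable and define ψ̃(x,t) = Ψ( x₋ + Δx·(x − g(t))/L(t) ). Then on any open time interval J containing T on which L(t) > 0, ψ̃ satisfies the transport equation ∂_t ψ̃(x,t) + α(x,t)·∂_x ψ̃(x,t) = 0 for all x ∈ ℝ and t ∈ J, with final data ψ̃(x,T) = Ψ(x). -/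
/-- The pulled-back basis functions solve the EL DG adjoint problem
`ψ̃ₜ + α(x,t)·ψ̃ₓ = 0` with final data `ψ̃(·,T) = Ψ`. -/
theorem pulled_back_basis_solves_adjoint
    (xm xp : ℝ) (hx : xm < xp) (νm νp T : ℝ)
    (g h L : ℝ → ℝ) (α : ℝ → ℝ → ℝ)
    (hg : g = fun t => xm + (t - T) * νm)
    (hh : h = fun t => xp + (t - T) * νp)
    (hL : L = fun t => h t - g t)
    (hα : α = fun x t => (νm * (h t - x) + νp * (x - g t)) / L t)
    (Ψ : ℝ → ℝ) (hΨ : ContDiff ℝ 1 Ψ)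
    (ψ : ℝ → ℝ → ℝ)
    (hψ : ψ = fun x t => Ψ (xm + (xp - xm) * (x - g t) / L t))
    (J : Set ℝ) (hJopen : IsOpen J) (hTJ : T ∈ J) (hLpos : ∀ t ∈ J, 0 < L t) :
    (∀ x : ℝ, ∀ t ∈ J,
      deriv (fun s => ψ x s) t + α x t * deriv (fun y => ψ y t) x = 0) ∧
    (∀ x : ℝ, ψ x T = Ψ x) := by
  have hΨat : ∀ y, HasDerivAt Ψ (deriv Ψ y) y := fun y =>
    ((hΨ.differentiable one_ne_zero) y).hasDerivAt
  constructor
  · intro x t ht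
    have hLne : L t ≠ 0 := ne_of_gt (hLpos t ht)
    -- derivatives of g, h, L
    have hgd : HasDerivAt g νm t := by
      subst hg
      simpa using (((hasDerivAt_id t).sub_const T).mul_const νm).const_add xm
    have hhd : HasDerivAt h νp t := by
      subst hh
      simpa using (((hasDerivAt_id t).sub_const T).mul_const νp).const_add xp
    have hLd : HasDerivAt L (νp - νm) t := by
      subst hL; exact hhd.sub hgd
    set u : ℝ := xm + (xp - xm) * (x - g t) / L t with hu
    -- t-derivative
    have hnum : HasDerivAt (fun s => (xp - xm) * (x - g s)) ((xp - xm) * (-νm)) t :=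
      (hgd.const_sub x).const_mul (xp - xm)
    have hinT : HasDerivAt (fun s => xm + (xp - xm) * (x - g s) / L s)
        (((xp - xm) * (-νm) * L t - (xp - xm) * (x - g t) * (νp - νm)) / (L t) ^ 2) t :=
      (hnum.div hLd hLne).const_add xm
    have hT : HasDerivAt (fun s => ψ x s)
        (deriv Ψ u * (((xp - xm) * (-νm) * L t - (xp - xm) * (x - g t) * (νp - νm)) / (L t) ^ 2)) t := by
      subst hψ
      exact (hΨat u).comp t hinT
    -- x-derivative
    have hinX : HasDerivAt (fun y => xm + (xp - xm) * (y - g t) / L t)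
        ((xp - xm) / L t) x := by
      have := ((((hasDerivAt_id x).sub_const (g t)).const_mul (xp - xm)).div_const (L t)).const_add xm
      simpa using this
    have hX : HasDerivAt (fun y => ψ y t) (deriv Ψ u * ((xp - xm) / L t)) x := by
      subst hψ
      exact (hΨat u).comp x hinX
    rw [hT.deriv, hX.deriv, hα]
    have hLdef : L t = h t - g t := by rw [hL]
    field_simp
    ring_nf
    rw [hLdef]
    ring
  · intro x
    have hgT : g T = xm := by rw [hg]; simp
    have hLT : L T = xp - xm := by rw [hL, hh, hg]; simp
    have hne : xp - xm ≠ 0 := sub_ne_zero.mpr (ne_of_gt hx)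
    rw [hψ]
    simp only [hgT, hLT]
    rw [mul_div_assoc]
    congr 1
    field_simp
    ring
end

section
/- DGCL computation for the linear test function (case Ψ = x of Proposition 4.1): let x₋ < x₊, and let Δt, ν₋, ν₊, α be real numbers; set x⁎₋ = x₋ − ν₋·Δt, x⁎₊ = x₊ − ν₊·Δt, and for a continuous function Ψ : ℝ → ℝ define R(Ψ) = ∫_{x⁎₋}^{x⁎₊} Ψ(x + α·Δt) dx − Δt·(α − ν₊)·Ψ(x⁎₊ + α·Δt) + Δt·(α − ν₋)·Ψ(x⁎₋ + α·Δt). Then for Ψ(x) = x one has R(Ψ) − ∫_{x₋}^{x₊} x dx = (Δt²/2)·( (α − ν₋)² − (α − ν₊)² ). In particular, if ν₋ = ν₊ then R(Ψ) = ∫_{x₋}^{x₊} Ψ(x) dx for every affine function Ψ, i.e. the forward-Euler GEL DG scheme satisfies the DGCL for P¹ test functions. -/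
lemma dgcl_aux_aff (a b c d : ℝ) :
    ∫ x in a..b, (c + d * x) = c * (b - a) + d * (b ^ 2 - a ^ 2) / 2 := by
  rw [intervalIntegral.integral_add intervalIntegrable_const
    (intervalIntegral.intervalIntegrable_id.const_mul d)]
  rw [intervalIntegral.integral_const_mul, integral_id]
  simp; ring

lemma dgcl_aux_shift (a b c : ℝ) :
    ∫ x in a..b, (x + c) = c * (b - a) + (b ^ 2 - a ^ 2) / 2 := by
  have := dgcl_aux_aff a b c 1
  simp only [one_mul] at this
  simpa [add_comm] using this


/-- DGCL computation for the linear test function (case Ψ = x of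
Proposition 4.1): the defect is `(Δt²/2)·((α − ν₋)² − (α − ν₊)²)`, and in
particular the DGCL holds for every affine test function when `ν₋ = ν₊`. -/
theorem dgcl_linear_test_function
    (xm xp : ℝ) (hx : xm < xp) (Δt νm νp α : ℝ)
    (xsm xsp : ℝ) (hxsm : xsm = xm - νm * Δt) (hxsp : xsp = xp - νp * Δt)
    (R : (ℝ → ℝ) → ℝ)
    (hR : R = fun Ψ => (∫ x in xsm..xsp, Ψ (x + α * Δt))
      - Δt * (α - νp) * Ψ (xsp + α * Δt) + Δt * (α - νm) * Ψ (xsm + α * Δt)) :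
    (R (fun x => x) - (∫ x in xm..xp, x)
        = Δt ^ 2 / 2 * ((α - νm) ^ 2 - (α - νp) ^ 2)) ∧
    (νm = νp → ∀ β0 β1 : ℝ,
      R (fun x => β0 + β1 * x) = ∫ x in xm..xp, (β0 + β1 * x)) := by
  subst hR hxsm hxsp
  constructor
  · simp only [dgcl_aux_shift, integral_id]
    ring
  · rintro rfl β0 β1
    have h : (fun x : ℝ => β0 + β1 * (x + α * Δt))
        = fun x : ℝ => (β0 + β1 * (α * Δt)) + β1 * x := by funext x; ring
    simp only [h, dgcl_aux_aff]
    ring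
end

section
/- DGCL computation for the quadratic test function on a centered cell (case Ψ = x² of Proposition 4.1): let Δx > 0 and let Δt, ν₋, ν₊, α be real numbers; take the centered cell x₋ = −Δx/2, x₊ = Δx/2, set x⁎₋ = x₋ − ν₋·Δt, x⁎₊ = x₊ − ν₊·Δt, and for a continuous function Ψ : ℝ → ℝ define R(Ψ) = ∫_{x⁎₋}^{x⁎₊} Ψ(x + α·Δt) dx − Δt·(α − ν₊)·Ψ(x⁎₊ + α·Δt) + Δt·(α − ν₋)·Ψ(x⁎₋ + α·Δt). Then for Ψ(x) = x² one has R(Ψ) − Δx³/12 = −(Δx·Δt²/2)·( (α − ν₊)² + (α − ν₋)² ) + (2Δt³/3)·( (α − ν₋)³ − (α − ν₊)³ ). In particular this difference vanishes when ν₋ = ν₊ = α. -/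
/-- DGCL computation for the quadratic test function on a centered cell
(case Ψ = x² of Proposition 4.1). -/
theorem dgcl_quadratic_test_function
    (Δx : ℝ) (hΔx : 0 < Δx) (Δt νm νp α : ℝ)
    (xm xp : ℝ) (hxm : xm = -(Δx / 2)) (hxp : xp = Δx / 2)
    (xsm xsp : ℝ) (hxsm : xsm = xm - νm * Δt) (hxsp : xsp = xp - νp * Δt)
    (R : (ℝ → ℝ) → ℝ)
    (hR : R = fun Ψ => (∫ x in xsm..xsp, Ψ (x + α * Δt))
      - Δt * (α - νp) * Ψ (xsp + α * Δt) + Δt * (α - νm) * Ψ (xsm + α * Δt)) :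
    (R (fun x => x ^ 2) - Δx ^ 3 / 12
        = -(Δx * Δt ^ 2 / 2) * ((α - νp) ^ 2 + (α - νm) ^ 2)
          + 2 * Δt ^ 3 / 3 * ((α - νm) ^ 3 - (α - νp) ^ 3)) ∧
    (νm = νp → νp = α → R (fun x => x ^ 2) - Δx ^ 3 / 12 = 0) := by
  have hint : (∫ x in xsm..xsp, (x + α * Δt) ^ 2)
      = ((xsp + α * Δt) ^ 3 - (xsm + α * Δt) ^ 3) / 3 := by
    rw [intervalIntegral.integral_comp_add_right (fun x => x ^ 2) (α * Δt),
      integral_pow]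
    ring
  have key : R (fun x => x ^ 2) - Δx ^ 3 / 12
      = -(Δx * Δt ^ 2 / 2) * ((α - νp) ^ 2 + (α - νm) ^ 2)
        + 2 * Δt ^ 3 / 3 * ((α - νm) ^ 3 - (α - νp) ^ 3) := by
    subst hR hxm hxp hxsm hxsp
    simp only [hint]
    ring
  refine ⟨key, fun h1 h2 => ?_⟩
  rw [key, h1, h2]
  ring
end

section
/- Exact solution of the variable-coefficient transport equation: define u : (0, π) × ℝ → ℝ by u(x,t) = sin( 2·arctan( e^{−t}·tan(x/2) ) ) / sin(x). Then u is differentiable on (0, π) × ℝ, it satisfies the conservation-law form ∂_t u(x,t) + ∂_x ( sin(x)·u(x,t) ) = 0 for all x ∈ (0, π) and t ∈ ℝ, and it satisfies the initial condition u(x,0) = 1 for all x ∈ (0, π). -/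
lemma sin_two_arctan' (s : ℝ) : Real.sin (2 * Real.arctan s) = 2*s/(1+s^2) := by
  have h0 : (0:ℝ) < 1 + s^2 := by positivity
  have hs : Real.sqrt (1+s^2) ≠ 0 := by positivity
  rw [Real.sin_two_mul, Real.sin_arctan, Real.cos_arctan]
  field_simp
  rw [Real.sq_sqrt h0.le]

lemma aux_sin (x : ℝ) (hc : Real.cos (x/2) ≠ 0) :
    Real.sin x = 2*Real.tan (x/2)/(1+Real.tan (x/2)^2) := by
  have hpy : Real.sin (x/2)^2 + Real.cos (x/2)^2 = 1 := Real.sin_sq_add_cos_sq (x/2)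
  have h1 : Real.sin x = 2 * Real.sin (x/2) * Real.cos (x/2) := by
    rw [show x = 2*(x/2) by ring, Real.sin_two_mul]; ring_nf
  rw [h1, Real.tan_eq_sin_div_cos]
  field_simp
  linear_combination Real.sin (x/2) * hpy

lemma aux_cos (x : ℝ) (hc : Real.cos (x/2) ≠ 0) :
    Real.cos x = (1-Real.tan (x/2)^2)/(1+Real.tan (x/2)^2) := by
  have hpy : Real.sin (x/2)^2 + Real.cos (x/2)^2 = 1 := Real.sin_sq_add_cos_sq (x/2)
  have h1 : Real.cos x = 2 * Real.cos (x/2)^2 - 1 := by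
    rw [show x = 2*(x/2) by ring, Real.cos_two_mul]; ring_nf
  rw [h1, Real.tan_eq_sin_div_cos]
  field_simp
  linear_combination 2 * Real.cos (x/2)^2 * hpy

lemma aux_inv (x : ℝ) (hc : Real.cos (x/2) ≠ 0) :
    1/Real.cos (x/2)^2 = 1+Real.tan (x/2)^2 := by
  have hpy : Real.sin (x/2)^2 + Real.cos (x/2)^2 = 1 := Real.sin_sq_add_cos_sq (x/2)
  rw [Real.tan_eq_sin_div_cos]
  field_simp
  linear_combination -hpy

open Real in
/-- Exact solution of the variable-coefficient transport equation
`uₜ + (sin(x)·u)ₓ = 0` with `u(x,0) = 1` on `(0, π)`: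
`u(x,t) = sin(2·arctan(e^{−t}·tan(x/2)))/sin(x)`. -/
theorem exact_solution_variable_coefficient
    (u : ℝ → ℝ → ℝ)
    (hu : u = fun x t => Real.sin (2 * Real.arctan (Real.exp (-t) * Real.tan (x / 2))) / Real.sin x) :
    ∀ x ∈ Set.Ioo (0:ℝ) Real.pi, ∀ t : ℝ,
      DifferentiableAt ℝ (fun p : ℝ × ℝ => u p.1 p.2) (x, t) ∧
      deriv (fun τ => u x τ) t + deriv (fun y => Real.sin y * u y t) x = 0 ∧
      u x 0 = 1 := by
  have hu2 : u = fun x t => 2*(Real.exp (-t) * Real.tan (x/2)) /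
      (1+(Real.exp (-t) * Real.tan (x/2))^2) / Real.sin x := by
    subst hu; funext x t; rw [sin_two_arctan']
  clear hu
  subst hu2
  rintro x ⟨hx0, hxpi⟩ t
  have hpi := Real.pi_pos
  have hc : Real.cos (x/2) ≠ 0 :=
    ne_of_gt (Real.cos_pos_of_mem_Ioo ⟨by linarith, by linarith⟩)
  have hS : Real.sin x ≠ 0 := ne_of_gt (Real.sin_pos_of_pos_of_lt_pi hx0 hxpi)
  refine ⟨?_, ?_, ?_⟩
  · -- differentiability
    have h0 : DifferentiableAt ℝ (fun p : ℝ × ℝ => p.1/2) (x,t) := by fun_prop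
    have h1 : DifferentiableAt ℝ (fun p : ℝ × ℝ => Real.tan (p.1/2)) (x,t) :=
      by have := (Real.differentiableAt_tan.mpr hc).comp (x, t) h0; exact this
    have h2 : DifferentiableAt ℝ (fun p : ℝ × ℝ => Real.exp (-p.2)) (x,t) :=
      differentiableAt_snd.neg.exp
    have h3 : DifferentiableAt ℝ (fun p : ℝ × ℝ => Real.exp (-p.2) * Real.tan (p.1/2)) (x,t) :=
      h2.mul h1
    have h4 : DifferentiableAt ℝ (fun p : ℝ × ℝ =>
        1 + (Real.exp (-p.2) * Real.tan (p.1/2))^2) (x,t) := (h3.pow 2).const_add 1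
    have h5 : DifferentiableAt ℝ (fun p : ℝ × ℝ => Real.sin p.1) (x,t) := by fun_prop
    have h6 : (1 : ℝ) + (Real.exp (-t) * Real.tan (x/2))^2 ≠ 0 := by positivity
    simp only [div_eq_mul_inv]
    exact ((h3.const_mul 2).mul (h4.inv h6)).mul (h5.inv hS)
  · -- PDE
    have haT : (0:ℝ) < 1 + (Real.exp (-t) * Real.tan (x/2))^2 := by positivity
    have hTpos : 0 < Real.tan (x/2) :=
      Real.tan_pos_of_pos_of_lt_pi_div_two (by linarith) (by linarith)
    have h1T : (0:ℝ) < 1 + Real.tan (x/2)^2 := by positivity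
    -- t-derivative
    have ha : HasDerivAt (fun τ : ℝ => Real.exp (-τ)) (-Real.exp (-t)) t := by
      simpa [Function.comp_def] using (Real.hasDerivAt_exp (-t)).comp t ((hasDerivAt_id t).neg)
    have hN : HasDerivAt (fun τ => 2*(Real.exp (-τ)*Real.tan (x/2)))
        (2*(-Real.exp (-t)*Real.tan (x/2))) t := by
      simpa [mul_comm, mul_assoc, mul_left_comm] using (ha.mul_const (Real.tan (x/2))).const_mul 2
    have hD : HasDerivAt (fun τ => 1+(Real.exp (-τ)*Real.tan (x/2))^2)
        (2*(Real.exp (-t)*Real.tan (x/2))*(-Real.exp (-t)*Real.tan (x/2))) t := by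
      have := ((ha.mul_const (Real.tan (x/2))).pow 2).const_add 1
      refine this.congr_deriv ?_
      ring
    have hQt : HasDerivAt
        (fun τ => 2*(Real.exp (-τ)*Real.tan (x/2))/(1+(Real.exp (-τ)*Real.tan (x/2))^2)/Real.sin x)
        (((2*(-Real.exp (-t)*Real.tan (x/2)))*(1+(Real.exp (-t)*Real.tan (x/2))^2)
           - (2*(Real.exp (-t)*Real.tan (x/2)))
             *(2*(Real.exp (-t)*Real.tan (x/2))*(-Real.exp (-t)*Real.tan (x/2))))
          /(1+(Real.exp (-t)*Real.tan (x/2))^2)^2/Real.sin x) t :=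
      (hN.div hD (ne_of_gt haT)).div_const _
    -- x-derivative
    have htan : HasDerivAt (fun y => Real.tan (y/2)) ((1+Real.tan (x/2)^2)*(1/2)) x := by
      have h2 : HasDerivAt (fun y : ℝ => y/2) (1/2) x := (hasDerivAt_id x).div_const 2
      have h3 := (Real.hasDerivAt_tan hc).comp x h2
      have h4 : 1 / Real.cos (x/2)^2 = 1 + Real.tan (x/2)^2 := aux_inv x hc
      simpa [h4, Function.comp_def] using h3
    have hNx : HasDerivAt (fun y => 2*(Real.exp (-t)*Real.tan (y/2)))
        (2*(Real.exp (-t)*((1+Real.tan (x/2)^2)*(1/2)))) x := by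
      simpa using (htan.const_mul (Real.exp (-t))).const_mul 2
    have hDx : HasDerivAt (fun y => 1+(Real.exp (-t)*Real.tan (y/2))^2)
        (2*(Real.exp (-t)*Real.tan (x/2))*(Real.exp (-t)*((1+Real.tan (x/2)^2)*(1/2)))) x := by
      have := ((htan.const_mul (Real.exp (-t))).pow 2).const_add 1
      refine this.congr_deriv ?_
      ring
    have hQx : HasDerivAt
        (fun y => 2*(Real.exp (-t)*Real.tan (y/2))/(1+(Real.exp (-t)*Real.tan (y/2))^2)/Real.sin y)
        ((((2*(Real.exp (-t)*((1+Real.tan (x/2)^2)*(1/2))))*(1+(Real.exp (-t)*Real.tan (x/2))^2)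
           - (2*(Real.exp (-t)*Real.tan (x/2)))
             *(2*(Real.exp (-t)*Real.tan (x/2))*(Real.exp (-t)*((1+Real.tan (x/2)^2)*(1/2)))))
          /(1+(Real.exp (-t)*Real.tan (x/2))^2)^2 * Real.sin x
          - 2*(Real.exp (-t)*Real.tan (x/2))/(1+(Real.exp (-t)*Real.tan (x/2))^2) * Real.cos x)
          / (Real.sin x)^2) x :=
      (hNx.div hDx (ne_of_gt haT)).div (Real.hasDerivAt_sin x) hS
    have hF : HasDerivAt (fun y => Real.sin y * (2*(Real.exp (-t)*Real.tan (y/2))/(1+(Real.exp (-t)*Real.tan (y/2))^2)/Real.sin y)) _ x := (Real.hasDerivAt_sin x).mul hQx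
    beta_reduce
    rw [hQt.deriv, hF.deriv]
    rw [aux_sin x hc, aux_cos x hc]
    have hSne : (2:ℝ)*Real.tan (x/2)/(1+Real.tan (x/2)^2) ≠ 0 := by positivity
    have hane : Real.exp (-t) ≠ 0 := (Real.exp_pos _).ne'
    field_simp
    ring
  · -- initial condition
    simp only [neg_zero, Real.exp_zero, one_mul]
    rw [aux_sin x hc]
    have h1T : (0:ℝ) < 1 + Real.tan (x/2)^2 := by positivity
    exact div_self ((aux_sin x hc) ▸ hS)
end
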